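/- For every n ≥ 0, the set (Sⁿ × [0,1]) ∪ (D^{n+1} × {0}) is a retract of D^{n+1} × [0,1], where Sⁿ = {x ∈ ℝ^{n+1} : ⟨x,x⟩ = 1} and D^{n+1} = {x ∈ ℝ^{n+1} : ⟨x,x⟩ ≤ 1}; consequently, the inclusion ι : Sⁿ ↪ D^{n+1} is a cofibration. -/

import Mathlib

open unitInterval

/-- `A` is a strong deformation retract of `X`. -/
def IsStrongDeformationRetract {X : Type*} [TopologicalSpace X] (A : Set X) : Prop :=
  ∃ H : X × I → X, Continuous H ∧ (∀ x : X, H (x, 0) = x) ∧ (∀ x : X, H (x, 1) ∈ A) ∧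
    ∀ a ∈ A, ∀ s : I, H (a, s) = a

/-- The inclusion `A ↪ X` is a cofibration: it has the homotopy extension property with
respect to every topological space `Y`. -/
def InclusionIsCofibration {X : Type*} [TopologicalSpace X] (A : Set X) : Prop :=
  ∀ (Y : Type*) [TopologicalSpace Y] (g : X → Y) (h : ↥A × I → Y),
    Continuous g → Continuous h → (∀ a : A, h (a, 0) = g (a : X)) →
      ∃ G : X × I → Y, Continuous G ∧ (∀ x : X, G (x, 0) = g x) ∧
        ∀ (a : A) (s : I), G ((a : X), s) = h (a, s)

/-- `S` is a retract of the topological space `Z`. -/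
def IsRetract {Z : Type*} [TopologicalSpace Z] (S : Set Z) : Prop :=
  ∃ r : Z → Z, Continuous r ∧ Set.range r ⊆ S ∧ ∀ z ∈ S, r z = z

/-- The subset `(A × [0,1]) ∪ (X × {0})` of `X × [0,1]`. -/
def cylinderUnionBase {X : Type*} [TopologicalSpace X] (A : Set X) : Set (X × I) :=
  {p : X × I | p.1 ∈ A ∨ p.2 = 0}

/-- `(X, A)` is an NDR pair. -/
def IsNDRPair {X : Type*} [TopologicalSpace X] (A : Set X) : Prop :=
  ∃ (u : X → I) (H : X × I → X),
    Continuous u ∧ A = u ⁻¹' {0} ∧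
    Continuous H ∧ (∀ x : X, H (x, 0) = x) ∧
    (∀ a ∈ A, ∀ s : I, H (a, s) = a) ∧
    ∀ x : X, (u x : ℝ) < 1 → H (x, 1) ∈ A

open Metric

lemma continuousOn_union_closed' {α β : Type*} [TopologicalSpace α] [TopologicalSpace β]
    {f : α → β} {s t : Set α} (hs : IsClosed s) (ht : IsClosed t)
    (hfs : ContinuousOn f s) (hft : ContinuousOn f t) : ContinuousOn f (s ∪ t) := by
  intro x hx
  apply ContinuousWithinAt.union
  · by_cases h : x ∈ s
    · exact hfs x h
    · exact continuousWithinAt_of_notMem_closure (by rwa [hs.closure_eq])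
  · by_cases h : x ∈ t
    · exact hft x h
    · exact continuousWithinAt_of_notMem_closure (by rwa [ht.closure_eq])

noncomputable def Fmap (n : ℕ)
    (p : ↥(closedBall (0 : EuclideanSpace ℝ (Fin (n + 1))) 1) × I) :
    EuclideanSpace ℝ (Fin (n + 1)) × ℝ :=
  if 2 - (p.2 : ℝ) ≤ 2 * ‖(p.1 : EuclideanSpace ℝ (Fin (n + 1)))‖ then
    ((max ‖(p.1 : EuclideanSpace ℝ (Fin (n + 1)))‖ 2⁻¹)⁻¹ •
        (p.1 : EuclideanSpace ℝ (Fin (n + 1))),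
      2 - (2 - (p.2 : ℝ)) / max ‖(p.1 : EuclideanSpace ℝ (Fin (n + 1)))‖ 2⁻¹)
  else ((2 / (2 - (p.2 : ℝ))) • (p.1 : EuclideanSpace ℝ (Fin (n + 1))), 0)

lemma Fmap_cont (n : ℕ) : Continuous (Fmap n) := by
  have hx : Continuous fun p : ↥(closedBall (0 : EuclideanSpace ℝ (Fin (n + 1))) 1) × I =>
      (p.1 : EuclideanSpace ℝ (Fin (n + 1))) := continuous_subtype_val.comp continuous_fst
  have ht : Continuous fun p : ↥(closedBall (0 : EuclideanSpace ℝ (Fin (n + 1))) 1) × I =>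
      (p.2 : ℝ) := continuous_subtype_val.comp continuous_snd
  have hnorm : Continuous fun p : ↥(closedBall (0 : EuclideanSpace ℝ (Fin (n + 1))) 1) × I =>
      ‖(p.1 : EuclideanSpace ℝ (Fin (n + 1)))‖ := hx.norm
  have hm : Continuous fun p : ↥(closedBall (0 : EuclideanSpace ℝ (Fin (n + 1))) 1) × I =>
      max ‖(p.1 : EuclideanSpace ℝ (Fin (n + 1)))‖ 2⁻¹ := hnorm.max continuous_const
  have hmne : ∀ p : ↥(closedBall (0 : EuclideanSpace ℝ (Fin (n + 1))) 1) × I,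
      max ‖(p.1 : EuclideanSpace ℝ (Fin (n + 1)))‖ 2⁻¹ ≠ 0 := fun p =>
    ne_of_gt (lt_of_lt_of_le (by norm_num) (le_max_right _ _))
  have htne : ∀ p : ↥(closedBall (0 : EuclideanSpace ℝ (Fin (n + 1))) 1) × I,
      2 - (p.2 : ℝ) ≠ 0 := fun p => by
    have := (p.2).2.2; intro h; nlinarith
  apply Continuous.if_le
  · exact ((hm.inv₀ hmne).smul hx).prodMk
      (continuous_const.sub ((continuous_const.sub ht).div hm hmne))
  · exact (((continuous_const.div (continuous_const.sub ht) htne).smul hx)).prodMk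
      continuous_const
  · exact continuous_const.sub ht
  · exact continuous_const.mul hnorm
  · intro p hp
    set a := ‖(p.1 : EuclideanSpace ℝ (Fin (n + 1)))‖ with ha
    have ht1 : (p.2 : ℝ) ≤ 1 := (p.2).2.2
    have ha2 : a = (2 - (p.2 : ℝ)) / 2 := by linarith [hp]
    have hhalf : (2⁻¹ : ℝ) ≤ a := by rw [ha2]; linarith
    have hmax : max a 2⁻¹ = a := max_eq_left hhalf
    have hapos : (0 : ℝ) < a := lt_of_lt_of_le (by norm_num) hhalf
    have h2t : 2 - (p.2 : ℝ) ≠ 0 := by intro h; nlinarith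
    rw [Prod.ext_iff]
    constructor
    · show (max a 2⁻¹)⁻¹ • _ = (2 / (2 - (p.2 : ℝ))) • _
      rw [hmax]
      congr 1
      rw [ha2, inv_div]
    · show 2 - (2 - (p.2 : ℝ)) / max a 2⁻¹ = 0
      rw [hmax]
      have h3 : (2 - (p.2 : ℝ)) / a = 2 := by rw [ha2]; field_simp
      rw [h3]; ring

lemma Fmap_prop (n : ℕ) (p : ↥(closedBall (0 : EuclideanSpace ℝ (Fin (n + 1))) 1) × I) :
    ‖(Fmap n p).1‖ ≤ 1 ∧ (Fmap n p).2 ∈ Set.Icc (0 : ℝ) 1 ∧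
      (‖(Fmap n p).1‖ = 1 ∨ (Fmap n p).2 = 0) := by
  set a := ‖(p.1 : EuclideanSpace ℝ (Fin (n + 1)))‖ with ha
  have ha1 : a ≤ 1 := mem_closedBall_zero_iff.mp (p.1).2
  have ht0 : (0 : ℝ) ≤ (p.2 : ℝ) := (p.2).2.1
  have ht1 : (p.2 : ℝ) ≤ 1 := (p.2).2.2
  unfold Fmap
  split_ifs with hcond
  · have hhalf : (2⁻¹ : ℝ) ≤ a := by rw [ha]; nlinarith [hcond]
    have hmax : max a 2⁻¹ = a := max_eq_left hhalf
    have hapos : (0 : ℝ) < a := lt_of_lt_of_le (by norm_num) hhalf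
    have hn1 : ‖(max a 2⁻¹)⁻¹ • (p.1 : EuclideanSpace ℝ (Fin (n + 1)))‖ = 1 := by
      rw [norm_smul, hmax, Real.norm_eq_abs, abs_of_pos (inv_pos.mpr hapos), ← ha]
      field_simp
    refine ⟨le_of_eq hn1, ⟨?_, ?_⟩, Or.inl hn1⟩
    · show (0 : ℝ) ≤ 2 - (2 - (p.2 : ℝ)) / max a 2⁻¹
      rw [hmax]
      rw [sub_nonneg, div_le_iff₀ hapos]
      linarith [hcond]
    · show 2 - (2 - (p.2 : ℝ)) / max a 2⁻¹ ≤ 1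
      rw [hmax]
      rw [sub_le_iff_le_add, ← sub_le_iff_le_add', le_div_iff₀ hapos]
      nlinarith
  · push_neg at hcond
    have hden : (0 : ℝ) < 2 - (p.2 : ℝ) := by linarith
    constructor
    · show ‖(2 / (2 - (p.2 : ℝ))) • (p.1 : EuclideanSpace ℝ (Fin (n + 1)))‖ ≤ 1
      rw [norm_smul, Real.norm_eq_abs, abs_of_pos (by positivity), ← ha]
      rw [div_mul_eq_mul_div, div_le_one hden]
      linarith [hcond]
    · exact ⟨Set.mem_Icc.mpr ⟨le_refl 0, by norm_num⟩, Or.inr rfl⟩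

lemma Fmap_fix (n : ℕ) (p : ↥(closedBall (0 : EuclideanSpace ℝ (Fin (n + 1))) 1) × I)
    (hp : (p.1 : EuclideanSpace ℝ (Fin (n + 1))) ∈ sphere (0 : EuclideanSpace ℝ (Fin (n + 1))) 1
      ∨ p.2 = 0) :
    Fmap n p = ((p.1 : EuclideanSpace ℝ (Fin (n + 1))), (p.2 : ℝ)) := by
  set a := ‖(p.1 : EuclideanSpace ℝ (Fin (n + 1)))‖ with ha
  have ht0 : (0 : ℝ) ≤ (p.2 : ℝ) := (p.2).2.1
  have ht1 : (p.2 : ℝ) ≤ 1 := (p.2).2.2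
  rcases hp with hp | hp
  · have ha1 : a = 1 := mem_sphere_zero_iff_norm.mp hp
    have hcond : 2 - (p.2 : ℝ) ≤ 2 * a := by rw [ha1]; linarith
    unfold Fmap
    rw [if_pos hcond]
    have hmax : max a 2⁻¹ = a := max_eq_left (by rw [ha1]; norm_num)
    rw [Prod.ext_iff]
    constructor
    · show (max a 2⁻¹)⁻¹ • _ = _
      rw [hmax, ha1]; simp
    · show 2 - (2 - (p.2 : ℝ)) / max a 2⁻¹ = (p.2 : ℝ)
      rw [hmax, ha1]; ring
  · by_cases hA : a = 1
    · have hcond : 2 - (p.2 : ℝ) ≤ 2 * a := by rw [hA]; linarith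
      unfold Fmap
      rw [if_pos hcond]
      have hmax : max a 2⁻¹ = a := max_eq_left (by rw [hA]; norm_num)
      rw [Prod.ext_iff]
      constructor
      · show (max a 2⁻¹)⁻¹ • _ = _
        rw [hmax, hA]; simp
      · show 2 - (2 - (p.2 : ℝ)) / max a 2⁻¹ = (p.2 : ℝ)
        rw [hmax, hA]; ring
    · have ha1 : a < 1 := lt_of_le_of_ne (mem_closedBall_zero_iff.mp (p.1).2) hA
      have hp' : (p.2 : ℝ) = 0 := by rw [hp]; rfl
      have hcond : ¬ (2 - (p.2 : ℝ) ≤ 2 * a) := by rw [hp']; push_neg; linarith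
      unfold Fmap
      rw [if_neg hcond]
      rw [Prod.ext_iff]
      constructor
      · show (2 / (2 - (p.2 : ℝ))) • _ = _
        rw [hp']; norm_num
      · show (0 : ℝ) = (p.2 : ℝ)
        rw [hp']

/-- For every `n ≥ 0`, `(Sⁿ × [0,1]) ∪ (Dⁿ⁺¹ × {0})` is a retract of `Dⁿ⁺¹ × [0,1]`;
consequently the inclusion `Sⁿ ↪ Dⁿ⁺¹` is a cofibration. -/
theorem sphere_inclusion_disk_cofibration (n : ℕ) :
    IsRetract (cylinderUnionBase
        {x : ↥(Metric.closedBall (0 : EuclideanSpace ℝ (Fin (n + 1))) 1) |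
          (x : EuclideanSpace ℝ (Fin (n + 1))) ∈ Metric.sphere 0 1}) ∧
      InclusionIsCofibration
        {x : ↥(Metric.closedBall (0 : EuclideanSpace ℝ (Fin (n + 1))) 1) |
          (x : EuclideanSpace ℝ (Fin (n + 1))) ∈ Metric.sphere 0 1} := by
  classical
  set A : Set ↥(Metric.closedBall (0 : EuclideanSpace ℝ (Fin (n + 1))) 1) :=
    {x | (x : EuclideanSpace ℝ (Fin (n + 1))) ∈ Metric.sphere 0 1} with hA
  have hmem1 : ∀ p, (Fmap n p).1 ∈ Metric.closedBall (0 : EuclideanSpace ℝ (Fin (n + 1))) 1 :=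
    fun p => mem_closedBall_zero_iff.mpr (Fmap_prop n p).1
  have hmem2 : ∀ p, (Fmap n p).2 ∈ I := fun p => (Fmap_prop n p).2.1
  set r : ↥(Metric.closedBall (0 : EuclideanSpace ℝ (Fin (n + 1))) 1) × I →
      ↥(Metric.closedBall (0 : EuclideanSpace ℝ (Fin (n + 1))) 1) × I :=
    fun p => (⟨(Fmap n p).1, hmem1 p⟩, ⟨(Fmap n p).2, hmem2 p⟩) with hr
  have hcont : Continuous r :=
    ((continuous_fst.comp (Fmap_cont n)).subtype_mk _).prodMk
      ((continuous_snd.comp (Fmap_cont n)).subtype_mk _)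
  have hrange : Set.range r ⊆ cylinderUnionBase A := by
    rintro z ⟨p, rfl⟩
    rcases (Fmap_prop n p).2.2 with h1 | h2
    · exact Or.inl (mem_sphere_zero_iff_norm.mpr h1)
    · exact Or.inr (Subtype.ext h2)
  have hfix : ∀ z ∈ cylinderUnionBase A, r z = z := by
    intro z hz
    have hz' : (z.1 : EuclideanSpace ℝ (Fin (n + 1))) ∈
        sphere (0 : EuclideanSpace ℝ (Fin (n + 1))) 1 ∨ z.2 = 0 := hz
    have h := Fmap_fix n z hz'
    rw [hr]
    rw [Prod.ext_iff]
    exact ⟨Subtype.ext (congrArg Prod.fst h), Subtype.ext (congrArg Prod.snd h)⟩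
  refine ⟨⟨r, hcont, hrange, hfix⟩, ?_⟩
  intro Y _ g h hg hh hcomp
  set q : ↥(Metric.closedBall (0 : EuclideanSpace ℝ (Fin (n + 1))) 1) × I → Y :=
    fun p => if hx : p.1 ∈ A then h (⟨p.1, hx⟩, p.2) else g p.1 with hq
  have hAclosed : IsClosed A :=
    (Metric.isClosed_sphere).preimage continuous_subtype_val
  have hS1 : IsClosed {p : ↥(Metric.closedBall (0 : EuclideanSpace ℝ (Fin (n + 1))) 1) × I |
      p.1 ∈ A} := hAclosed.preimage continuous_fst
  have hS2 : IsClosed {p : ↥(Metric.closedBall (0 : EuclideanSpace ℝ (Fin (n + 1))) 1) × I |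
      p.2 = 0} := isClosed_eq continuous_snd continuous_const
  have hq1 : ContinuousOn q {p | p.1 ∈ A} := by
    rw [continuousOn_iff_continuous_restrict]
    have heq : Set.domRestrict {p | p.1 ∈ A} q =
        fun p : {p : ↥(Metric.closedBall (0 : EuclideanSpace ℝ (Fin (n + 1))) 1) × I //
          p.1 ∈ A} => h (⟨p.1.1, p.2⟩, p.1.2) := by
      funext p
      simp only [Set.domRestrict_apply, hq]
      exact dif_pos p.2
    rw [heq]
    exact hh.comp (((continuous_fst.comp continuous_subtype_val).subtype_mk _).prodMk
      (continuous_snd.comp continuous_subtype_val))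
  have hq2 : ContinuousOn q {p | p.2 = 0} := by
    rw [continuousOn_iff_continuous_restrict]
    have heq : Set.domRestrict {p | p.2 = 0} q =
        fun p : {p : ↥(Metric.closedBall (0 : EuclideanSpace ℝ (Fin (n + 1))) 1) × I //
          p.2 = 0} => g p.1.1 := by
      funext p
      simp only [Set.domRestrict_apply, hq]
      split_ifs with hx
      · have h0 : p.1.2 = (0 : I) := p.2
        rw [h0, hcomp ⟨p.1.1, hx⟩]
      · rfl
    rw [heq]
    exact hg.comp (continuous_fst.comp continuous_subtype_val)
  have hqS : ContinuousOn q (cylinderUnionBase A) := by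
    have hun : cylinderUnionBase A = {p | p.1 ∈ A} ∪ {p | p.2 = 0} := rfl
    rw [hun]
    exact continuousOn_union_closed' hS1 hS2 hq1 hq2
  refine ⟨q ∘ r, hqS.comp_continuous hcont (fun p => hrange ⟨p, rfl⟩), ?_, ?_⟩
  · intro x
    have hfx : r (x, 0) = (x, 0) := hfix _ (Or.inr rfl)
    rw [Function.comp_apply, hfx]
    simp only [hq]
    split_ifs with hx
    · exact hcomp ⟨x, hx⟩
    · rfl
  · intro a s
    have hfx : r (↑a, s) = (↑a, s) := hfix (↑a, s) (Or.inl a.2)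
    rw [Function.comp_apply, hfx]
    simp only [hq]
    rw [dif_pos a.2]
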